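/- Let A₁,…,A_m be subspaces of a finite-dimensional vector space U over a field that all factor through a decomposition U₁,…,U_r of U. Then DisCoord computed in U equals the sum of the discoordinations of the restricted families: DisCoord^U(A₁,…,A_m) = Σ_{j=1}^r DisCoord^{U_j}(A₁ ∩ U_j, …, A_m ∩ U_j). -/

import Mathlib

open Set Submodule Module


/-- The discoordination of `X` with respect to the family `A`:
`Σ_i (dim A_i − |X ∩ A_i|)`. -/
noncomputable def disCoordX (𝔽 : Type*) [Field 𝔽] {U : Type*} [AddCommGroup U]
    [Module 𝔽 U] {m : ℕ} (X : Set U) (A : Fin m → Submodule 𝔽 U) : ℕ :=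
  ∑ i, (Module.finrank 𝔽 ↥(A i) - (X ∩ (A i : Set U)).ncard)

/-- The discoordination of the family `A₁, …, A_m`: the minimum of
`disCoordX` over all linearly independent subsets `X` of the ambient space. -/
noncomputable def DisCoord (𝔽 : Type*) [Field 𝔽] {U : Type*} [AddCommGroup U]
    [Module 𝔽 U] {m : ℕ} (A : Fin m → Submodule 𝔽 U) : ℕ :=
  sInf { n : ℕ | ∃ X : Set U, LinearIndependent 𝔽 (fun x : X => (x : U)) ∧
    n = disCoordX 𝔽 X A }

/-- A finite family of subspaces is linearly independent: whenever a sum of elements,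
one from each subspace, is zero, every term is zero. -/
def SubspacesIndep {𝔽 V : Type*} [Field 𝔽] [AddCommGroup V] [Module 𝔽 V]
    {ι : Type*} [Fintype ι] (Us : ι → Submodule 𝔽 V) : Prop :=
  ∀ v : ι → V, (∀ i, v i ∈ Us i) → ∑ i, v i = 0 → ∀ i, v i = 0


section helpers

variable {𝔽 U : Type*} [Field 𝔽] [AddCommGroup U] [Module 𝔽 U]
variable {ι : Type*} [Fintype ι] [DecidableEq ι]


variable {𝔽 U : Type*} [Field 𝔽] [AddCommGroup U] [Module 𝔽 U]
variable {ι : Type*} [Fintype ι] [DecidableEq ι]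

lemma mem_biSup_exists (p : ι → Submodule 𝔽 U) (S : Finset ι) {x : U}
    (hx : x ∈ ⨆ j ∈ S, p j) :
    ∃ v : ι → U, (∀ j, v j ∈ p j) ∧ (∀ j ∉ S, v j = 0) ∧ ∑ j, v j = x := by
  classical
  induction S using Finset.induction generalizing x with
  | empty =>
    simp only [Finset.notMem_empty, iSup_false, iSup_bot, Submodule.mem_bot] at hx
    exact ⟨fun _ => 0, fun _ => Submodule.zero_mem _, fun _ _ => rfl, by simp [hx]⟩
  | @insert a S ha ih =>
    rw [Finset.iSup_insert] at hx
    obtain ⟨y, hy, z, hz, rfl⟩ := Submodule.mem_sup.1 hx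
    obtain ⟨v, hv, hv0, hvsum⟩ := ih hz
    refine ⟨fun j => v j + if j = a then y else 0, fun j => ?_, fun j hj => ?_, ?_⟩
    · by_cases h : j = a
      · subst h; simpa using add_mem (hv j) hy
      · simpa [h] using hv j
    · have hja : j ≠ a := fun h => hj (h ▸ Finset.mem_insert_self a S)
      have := hv0 j (fun h => hj (Finset.mem_insert_of_mem h))
      simp [hja, this]
    · rw [Finset.sum_add_distrib, hvsum, Finset.sum_ite_eq' Finset.univ a (fun _ => y)]
      simp [add_comm]

lemma eq_zero_of_mem_of_mem_biSup {p : ι → Submodule 𝔽 U}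
    (hp : SubspacesIndep p) {S : Finset ι} {k : ι} (hk : k ∉ S) {x : U}
    (hxk : x ∈ p k) (hxS : x ∈ ⨆ j ∈ S, p j) : x = 0 := by
  obtain ⟨v, hv, hv0, hsum⟩ := mem_biSup_exists p S hxS
  have hz := hp (fun j => v j + if j = k then -x else 0)
    (fun j => by
      by_cases h : j = k
      · subst h; simpa using add_mem (hv j) (neg_mem hxk)
      · simpa [h] using hv j)
    (by rw [Finset.sum_add_distrib, hsum, Finset.sum_ite_eq' Finset.univ k (fun _ => -x)]
        simp) k
  have hvk : v k = 0 := hv0 k hk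
  simp [hvk] at hz
  exact hz

lemma finrank_biSup_eq_sum [FiniteDimensional 𝔽 U]
    {p : ι → Submodule 𝔽 U} (hp : SubspacesIndep p) (S : Finset ι) :
    finrank 𝔽 ↥(⨆ j ∈ S, p j) = ∑ j ∈ S, finrank 𝔽 ↥(p j) := by
  classical
  induction S using Finset.induction with
  | empty => simp
  | @insert a S ha ih =>
    rw [Finset.iSup_insert, Finset.sum_insert ha, ← ih]
    have hdisj : p a ⊓ (⨆ j ∈ S, p j) = ⊥ := by
      rw [eq_bot_iff]
      rintro x hx
      rw [Submodule.mem_inf] at hx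
      exact (Submodule.mem_bot 𝔽).2 (eq_zero_of_mem_of_mem_biSup hp ha hx.1 hx.2)
    have h := Submodule.finrank_sup_add_finrank_inf_eq (p a) (⨆ j ∈ S, p j)
    rw [hdisj, finrank_bot] at h
    omega

lemma ncard_le_finrank' [FiniteDimensional 𝔽 U] {s : Set U} {p : Submodule 𝔽 U}
    (hs : LinearIndependent 𝔽 (fun x : s => (x : U))) (hsp : s ⊆ ↑p) :
    s.ncard ≤ finrank 𝔽 ↥p := by
  have hfin : s.Finite := hs.setFinite
  have := hfin.fintype
  rw [Set.ncard_eq_toFinset_card' s, ← finrank_span_set_eq_card hs]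
  exact Submodule.finrank_mono (Submodule.span_le.2 hsp)

lemma ncard_biUnion_finset {α : Type*} {f : ι → Set α} (S : Finset ι)
    (hfin : ∀ j ∈ S, (f j).Finite)
    (hdisj : ∀ j ∈ S, ∀ k ∈ S, j ≠ k → Disjoint (f j) (f k)) :
    (⋃ j ∈ S, f j).ncard = ∑ j ∈ S, (f j).ncard := by
  classical
  induction S using Finset.induction with
  | empty => simp
  | @insert a S ha ih =>
    rw [Finset.set_biUnion_insert, Finset.sum_insert ha]
    have hUfin : (⋃ j ∈ S, f j).Finite :=
      Set.Finite.biUnion S.finite_toSet (fun j hj => hfin j (Finset.mem_insert_of_mem hj))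
    rw [Set.ncard_union_eq ?hd (hfin a (Finset.mem_insert_self a S)) hUfin,
      ih (fun j hj => hfin j (Finset.mem_insert_of_mem hj))
        (fun j hj k hk h => hdisj j (Finset.mem_insert_of_mem hj) k (Finset.mem_insert_of_mem hk) h)]
    case hd =>
      rw [Set.disjoint_iUnion₂_right]
      intro j hj
      exact hdisj a (Finset.mem_insert_self a S) j (Finset.mem_insert_of_mem hj)
        (fun h => ha (h ▸ hj))

lemma ncard_eq_sum_inter {p : ι → Submodule 𝔽 U}
    (hp : SubspacesIndep p) {Y : Set U} (hY : Y.Finite) (h0 : (0 : U) ∉ Y)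
    (hcov : ∀ x ∈ Y, ∃ j, x ∈ p j) :
    Y.ncard = ∑ j, (Y ∩ (p j : Set U)).ncard := by
  classical
  have hunion : Y = ⋃ j ∈ Finset.univ, (Y ∩ (p j : Set U)) := by
    ext x
    simp only [Set.mem_iUnion, Set.mem_inter_iff, Finset.mem_univ, exists_true_left, iSup_pos]
    exact ⟨fun hx => (hcov x hx).imp (fun j hj => ⟨hx, hj⟩), fun ⟨j, hj, _⟩ => hj⟩
  rw [show ∑ j, (Y ∩ (p j : Set U)).ncard = ∑ j ∈ Finset.univ, (Y ∩ (p j : Set U)).ncard from rfl,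
    ← ncard_biUnion_finset Finset.univ (fun j _ => hY.inter_of_left _) ?_, ← hunion]
  intro j _ k _ hjk
  rw [Set.disjoint_left]
  rintro x ⟨hxY, hxj⟩ ⟨_, hxk⟩
  exact h0 (by
    have : x = 0 := eq_zero_of_mem_of_mem_biSup hp (S := {k}) (k := j)
      (by simp [hjk]) hxj (by simpa using hxk)
    exact this ▸ hxY)

lemma preimage_indep {p : Submodule 𝔽 U} {X : Set U}
    (hX : LinearIndependent 𝔽 (fun x : X => (x : U))) :
    LinearIndependent 𝔽 (fun y : (p.subtype ⁻¹' X) => (y : ↥p)) := by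
  apply LinearIndependent.of_comp p.subtype
  have hinj : Function.Injective
      (fun y : (p.subtype ⁻¹' X) => (⟨(y : ↥p), y.2⟩ : X)) := by
    intro a b hab
    apply Subtype.ext
    apply Subtype.ext
    exact congrArg (fun z : X => (z : U)) hab
  exact hX.comp _ hinj

lemma image_indep {p : Submodule 𝔽 U} {Y : Set ↥p}
    (hY : LinearIndependent 𝔽 (fun y : Y => (y : ↥p))) :
    LinearIndependent 𝔽 (fun x : (((↑) : ↥p → U) '' Y) => (x : U)) := by
  have h1 : LinearIndependent 𝔽 (fun y : Y => ((y : ↥p) : U)) :=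
    hY.map' p.subtype (Submodule.ker_subtype p)
  rw [Set.image_eq_range]
  exact (linearIndepOn_id_range_iff h1.injective).mpr h1


variable [FiniteDimensional 𝔽 U] {m r : ℕ}

lemma disCoordX_decomp (Us : Fin r → Submodule 𝔽 U) (A : Fin m → Submodule 𝔽 U)
    (hindep : SubspacesIndep Us) (hfac : ∀ i, (⨆ j, A i ⊓ Us j) = A i)
    {X : Set U} (hX : LinearIndependent 𝔽 (fun x : X => (x : U)))
    (hXsub : ∀ x ∈ X, ∃ j, x ∈ Us j) :
    disCoordX 𝔽 X A = ∑ j, disCoordX 𝔽 ((Us j).subtype ⁻¹' X)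
      (fun i => (A i ⊓ Us j).comap (Us j).subtype) := by
  classical
  unfold disCoordX
  rw [Finset.sum_comm]
  refine Finset.sum_congr rfl fun i _ => ?_
  -- abbreviations
  set d : Fin r → ℕ := fun j => finrank 𝔽 ↥(A i ⊓ Us j) with hd
  set c : Fin r → ℕ := fun j => ((X ∩ (A i : Set U)) ∩ (Us j : Set U)).ncard with hc
  have h0X : (0 : U) ∉ X := fun h => (hX.ne_zero ⟨0, h⟩) rfl
  have hXfin : X.Finite := hX.setFinite
  -- step 1 : finrank of comap
  have hstep1 : ∀ j, finrank 𝔽 ↥((A i ⊓ Us j).comap (Us j).subtype) = d j := fun j =>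
    (Submodule.comapSubtypeEquivOfLe inf_le_right).finrank_eq
  -- step 2 : cards of preimages
  have hstep2 : ∀ j : Fin r,
      ((Us j).subtype ⁻¹' X ∩ ((A i ⊓ Us j).comap (Us j).subtype : Set ↥(Us j))).ncard = c j := by
    intro j
    have hset : ((Us j).subtype ⁻¹' X ∩ ((A i ⊓ Us j).comap (Us j).subtype : Set ↥(Us j)))
        = ((↑) : ↥(Us j) → U) ⁻¹' ((X ∩ (A i : Set U)) ∩ (Us j : Set U)) := by
      ext y
      simp only [Set.mem_inter_iff, Set.mem_preimage, SetLike.mem_coe, Submodule.mem_comap,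
        Submodule.mem_inf, Submodule.coe_subtype]
      exact ⟨fun ⟨h1, h2, h3⟩ => ⟨⟨h1, h2⟩, h3⟩, fun ⟨⟨h1, h2⟩, h3⟩ => ⟨h1, h2, h3⟩⟩
    rw [hset, hc]
    have := Set.ncard_image_of_injective
      (((↑) : ↥(Us j) → U) ⁻¹' ((X ∩ (A i : Set U)) ∩ (Us j : Set U))) (Subtype.val_injective)
    rw [← this, Set.image_preimage_eq_inter_range, Subtype.range_coe]
    congr 1
    rw [Set.inter_eq_self_of_subset_left]
    exact Set.inter_subset_right
  -- step 3 : c j ≤ d j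
  have hstep3 : ∀ j, c j ≤ d j := by
    intro j
    refine ncard_le_finrank' (LinearIndepOn.mono (v := id) hX (fun x hx => hx.1.1)) ?_
    rintro x ⟨⟨_, h1⟩, h2⟩
    exact Submodule.mem_inf.2 ⟨h1, h2⟩
  -- rewrite summand
  have hsummand : ∀ j : Fin r,
      (finrank 𝔽 ↥((A i ⊓ Us j).comap (Us j).subtype) -
        ((Us j).subtype ⁻¹' X ∩ ((A i ⊓ Us j).comap (Us j).subtype : Set ↥(Us j))).ncard)
      = d j - c j := fun j => by rw [hstep1, hstep2]
  rw [Finset.sum_congr rfl (fun j _ => hsummand j),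
    Finset.sum_tsub_distrib _ (fun j _ => hstep3 j)]
  -- step 5 : sum of dims
  have hstep5 : ∑ j, d j = finrank 𝔽 ↥(A i) := by
    have hip : SubspacesIndep (fun j => A i ⊓ Us j) := by
      intro v hv hsum j
      exact hindep v (fun l => (hv l).2) hsum j
    have huniv : (⨆ j ∈ Finset.univ, (A i ⊓ Us j)) = ⨆ j, A i ⊓ Us j := by simp
    rw [← finrank_biSup_eq_sum hip Finset.univ, huniv, hfac i]
  -- step 6 : sum of cards
  have hstep6 : ∑ j, c j = (X ∩ (A i : Set U)).ncard := by
    rw [hc]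
    refine (ncard_eq_sum_inter hindep (hXfin.inter_of_left _)
      (fun h => h0X h.1) (fun x hx => hXsub x hx.1)).symm
  rw [hstep5, hstep6]

lemma purify (Us : Fin r → Submodule 𝔽 U) (A : Fin m → Submodule 𝔽 U)
    (hindep : SubspacesIndep Us) (hsum : (⨆ j, Us j) = ⊤)
    (hfac : ∀ i, (⨆ j, A i ⊓ Us j) = A i) :
    ∀ (n : ℕ) (X : Set U), (X \ ⋃ j, (Us j : Set U)).ncard ≤ n →
      LinearIndependent 𝔽 (fun x : X => (x : U)) →
      ∃ X' : Set U, LinearIndependent 𝔽 (fun x : X' => (x : U)) ∧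
        (∀ x ∈ X', ∃ j, x ∈ Us j) ∧
        ∀ i, (X ∩ (A i : Set U)).ncard ≤ (X' ∩ (A i : Set U)).ncard := by
  classical
  intro n
  induction n with
  | zero =>
    intro X hcard hX
    have hXfin : X.Finite := hX.setFinite
    have hempty : X \ ⋃ j, (Us j : Set U) = ∅ := by
      exact (Set.ncard_eq_zero (hXfin.diff)).1 (by omega)
    have hXC : X ⊆ ⋃ j, (Us j : Set U) := Set.diff_eq_empty.1 hempty
    exact ⟨X, hX, fun x hx => Set.mem_iUnion.1 (hXC hx), fun i => le_refl _⟩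
  | succ n ih =>
    intro X hcard hX
    have hXfin : X.Finite := hX.setFinite
    by_cases hXC : X ⊆ ⋃ j, (Us j : Set U)
    · exact ⟨X, hX, fun x hx => Set.mem_iUnion.1 (hXC hx), fun i => le_refl _⟩
    obtain ⟨x, hxX, hxC⟩ := Set.not_subset.1 hXC
    set s : Set U := X \ {x} with hs_def
    have hxs : x ∉ s := fun h => h.2 rfl
    have hins : insert x s = X := by
      rw [hs_def, Set.insert_diff_singleton, Set.insert_eq_self.2 hxX]
    have hX2 : LinearIndependent 𝔽 (fun b : ↥(insert x s) => (b : U)) := by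
      rw [hins]; exact hX
    obtain ⟨hs_ind, hx_span⟩ := (linearIndepOn_id_insert hxs).1 hX2
    -- components of x
    have hxtop : x ∈ ⨆ j ∈ Finset.univ, Us j := by
      have : (⨆ j ∈ Finset.univ, Us j) = ⨆ j, Us j := by simp
      rw [this, hsum]; exact Submodule.mem_top
    obtain ⟨v, hv, -, hvsum⟩ := mem_biSup_exists Us Finset.univ hxtop
    have hvA : ∀ i, x ∈ A i → ∀ j, v j ∈ A i := by
      intro i hxi j
      have hxi' : x ∈ ⨆ j ∈ Finset.univ, (A i ⊓ Us j) := by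
        have h1 : (⨆ j ∈ Finset.univ, (A i ⊓ Us j)) = ⨆ j, A i ⊓ Us j := by simp
        rw [h1, hfac i]; exact hxi
      obtain ⟨w, hw, -, hwsum⟩ := mem_biSup_exists (fun j => A i ⊓ Us j) Finset.univ hxi'
      have hz := hindep (fun l => v l - w l) (fun l => sub_mem (hv l) (hw l).2)
        (by rw [Finset.sum_sub_distrib, hvsum, hwsum, sub_self]) j
      rw [sub_eq_zero.1 hz]
      exact (hw j).1
    have hexists : ∃ j, v j ∉ Submodule.span 𝔽 s := by
      by_contra h
      push_neg at h
      exact hx_span (hvsum ▸ Submodule.sum_mem _ fun j _ => h j)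
    obtain ⟨j₀, hj₀⟩ := hexists
    set X' : Set U := insert (v j₀) s with hX'_def
    have hvj₀s : v j₀ ∉ s := fun h => hj₀ (Submodule.subset_span h)
    have hX' : LinearIndependent 𝔽 (fun b : ↥X' => (b : U)) :=
      (linearIndepOn_id_insert hvj₀s).2 ⟨hs_ind, hj₀⟩
    have hsfin : s.Finite := hXfin.diff
    have hX'fin : X'.Finite := hsfin.insert _
    -- measure decreases
    have hmeas : (X' \ ⋃ j, (Us j : Set U)).ncard ≤ n := by
      have hsub : X' \ ⋃ j, (Us j : Set U) ⊆ (X \ ⋃ j, (Us j : Set U)) \ {x} := by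
        rintro y ⟨hy1, hy2⟩
        rcases hy1 with rfl | hy1
        · exact absurd (Set.mem_iUnion.2 ⟨j₀, hv j₀⟩) hy2
        · exact ⟨⟨hy1.1, hy2⟩, hy1.2⟩
      have h1 : (X' \ ⋃ j, (Us j : Set U)).ncard ≤ ((X \ ⋃ j, (Us j : Set U)) \ {x}).ncard :=
        Set.ncard_le_ncard hsub ((hXfin.diff).diff)
      have h2 : ((X \ ⋃ j, (Us j : Set U)) \ {x}).ncard
          = (X \ ⋃ j, (Us j : Set U)).ncard - 1 :=
        Set.ncard_diff_singleton_of_mem (show x ∈ X \ ⋃ j, (Us j : Set U) from ⟨hxX, hxC⟩)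
      have h3 : x ∈ X \ ⋃ j, (Us j : Set U) := ⟨hxX, hxC⟩
      have h4 : 1 ≤ (X \ ⋃ j, (Us j : Set U)).ncard := by
        have := Set.ncard_pos (hXfin.diff) |>.2 ⟨x, h3⟩
        omega
      omega
    obtain ⟨X'', hX''ind, hX''cov, hX''card⟩ := ih X' hmeas hX'
    refine ⟨X'', hX''ind, hX''cov, fun i => le_trans ?_ (hX''card i)⟩
    by_cases hxi : x ∈ (A i : Set U)
    · have h1 : X ∩ (A i : Set U) = insert x (s ∩ (A i : Set U)) := by
        rw [← hins, Set.insert_inter_of_mem hxi]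
      have h2 : X' ∩ (A i : Set U) = insert (v j₀) (s ∩ (A i : Set U)) :=
        Set.insert_inter_of_mem (hvA i hxi j₀)
      rw [h1, h2, Set.ncard_insert_of_notMem (fun h => hxs h.1) (hsfin.inter_of_left _),
        Set.ncard_insert_of_notMem (fun h => hvj₀s h.1) (hsfin.inter_of_left _)]
    · have h1 : X ∩ (A i : Set U) ⊆ X' ∩ (A i : Set U) := by
        rintro y ⟨hyX, hyA⟩
        have : y ≠ x := fun h => hxi (h ▸ hyA)
        exact ⟨Set.mem_insert_of_mem _ ⟨hyX, this⟩, hyA⟩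
      exact Set.ncard_le_ncard h1 (hX'fin.inter_of_left _)

end helpers

/-- If subspaces `A₁, …, A_m` all factor through a decomposition
`U₁, …, U_r` of the whole space `U`, then the discoordination computed in `U` equals
the sum over `j` of the discoordinations of the restricted families
`A₁ ∩ U_j, …, A_m ∩ U_j` computed in `U_j`. -/
theorem disCoord_factors_through_decomposition {𝔽 U : Type*} [Field 𝔽] [AddCommGroup U]
    [Module 𝔽 U] [FiniteDimensional 𝔽 U] {m r : ℕ}
    (Us : Fin r → Submodule 𝔽 U) (A : Fin m → Submodule 𝔽 U)
    (hindep : SubspacesIndep Us) (hsum : (⨆ j, Us j) = ⊤)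
    (hfac : ∀ i, (⨆ j, A i ⊓ Us j) = A i) :
    DisCoord 𝔽 A =
      ∑ j, DisCoord 𝔽 (fun i => (A i ⊓ Us j).comap (Us j).subtype) := by

  classical
  have hzero : ∀ (j k : Fin r), j ≠ k → ∀ x : U, x ∈ Us j → x ∈ Us k → x = 0 := by
    intro j k hjk x hxj hxk
    exact eq_zero_of_mem_of_mem_biSup hindep (S := {k}) (by simp [hjk]) hxj (by simpa using hxk)
  apply le_antisymm
  · -- DisCoord ≤ ∑ : build a union of witnesses
    have hchoice : ∀ j : Fin r, ∃ Y : Set ↥(Us j),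
        LinearIndependent 𝔽 (fun y : Y => (y : ↥(Us j))) ∧
        DisCoord 𝔽 (fun i => (A i ⊓ Us j).comap (Us j).subtype)
          = disCoordX 𝔽 Y (fun i => (A i ⊓ Us j).comap (Us j).subtype) := by
      intro j
      exact Nat.sInf_mem (s := {n : ℕ | ∃ Y : Set ↥(Us j),
          LinearIndependent 𝔽 (fun y : Y => (y : ↥(Us j))) ∧
          n = disCoordX 𝔽 Y (fun i => (A i ⊓ Us j).comap (Us j).subtype)})
        ⟨disCoordX 𝔽 (∅ : Set ↥(Us j)) (fun i => (A i ⊓ Us j).comap (Us j).subtype),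
          ∅, linearIndependent_empty 𝔽 ↥(Us j), rfl⟩
    choose Y hYind hYval using hchoice
    set X : Set U := ⋃ j, (((↑) : ↥(Us j) → U) '' (Y j)) with hX_def
    have hXind : LinearIndependent 𝔽 (fun x : X => (x : U)) := by
      apply linearIndepOn_id_iUnion_finite
        (f := fun j => (((↑) : ↥(Us j) → U) '' (Y j)))
      · intro j; exact image_indep (hYind j)
      · intro j t ht hjt
        have h1 : span 𝔽 (((↑) : ↥(Us j) → U) '' (Y j)) ≤ Us j :=
          span_le.2 (by rintro _ ⟨y, -, rfl⟩; exact y.2)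
        have h2 : (⨆ k ∈ t, span 𝔽 (((↑) : ↥(Us k) → U) '' (Y k))) ≤ ⨆ k ∈ ht.toFinset, Us k := by
          refine iSup₂_le fun k hk => ?_
          refine le_trans (span_le.2 ?_) (le_iSup₂ (f := fun k _ => Us k) k (ht.mem_toFinset.2 hk))
          rintro _ ⟨y, -, rfl⟩; exact y.2
        rw [Submodule.disjoint_def]
        intro x hx1 hx2
        exact eq_zero_of_mem_of_mem_biSup hindep (k := j) (S := ht.toFinset)
          (fun h => hjt (ht.mem_toFinset.1 h)) (h1 hx1) (h2 hx2)
    have hXcov : ∀ x ∈ X, ∃ j, x ∈ Us j := by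
      intro x hx
      obtain ⟨j, y, -, rfl⟩ := Set.mem_iUnion.1 hx
      exact ⟨j, y.2⟩
    have hpre : ∀ j, (Us j).subtype ⁻¹' X = Y j := by
      intro j
      ext y
      constructor
      · intro hy
        obtain ⟨k, x', hx', hxy⟩ := Set.mem_iUnion.1 hy
        have hxy' : (x' : U) = (y : U) := hxy
        by_cases hkj : k = j
        · subst hkj
          rwa [show x' = y from Subtype.val_injective hxy'] at hx'
        · exfalso
          have h0 : (y : U) = 0 := hzero j k (fun h => hkj h.symm) _ y.2 (hxy' ▸ x'.2)
          have hx'0 : x' = 0 := Subtype.val_injective (by rw [hxy', h0]; rfl)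
          exact (hYind k).ne_zero ⟨x', hx'⟩ (Subtype.ext (by simp [hx'0]))
      · intro hy
        exact Set.mem_iUnion.2 ⟨j, Set.mem_image_of_mem _ hy⟩
    have h1 : DisCoord 𝔽 A ≤ disCoordX 𝔽 X A := Nat.sInf_le ⟨X, hXind, rfl⟩
    have h2 := disCoordX_decomp Us A hindep hfac hXind hXcov
    rw [h2] at h1
    refine le_trans h1 (le_of_eq (Finset.sum_congr rfl fun j _ => ?_))
    rw [hpre j, ← hYval j]
  · -- ∑ ≤ DisCoord
    obtain ⟨X, hX, hXval⟩ := Nat.sInf_mem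
      (⟨disCoordX 𝔽 (∅ : Set U) A, ∅, linearIndependent_empty 𝔽 U, rfl⟩ :
        {n : ℕ | ∃ X : Set U, LinearIndependent 𝔽 (fun x : X => (x : U)) ∧
          n = disCoordX 𝔽 X A}.Nonempty)
    obtain ⟨X', hX'ind, hX'cov, hX'card⟩ := purify Us A hindep hsum hfac _ X le_rfl hX
    calc ∑ j, DisCoord 𝔽 (fun i => (A i ⊓ Us j).comap (Us j).subtype)
        ≤ ∑ j, disCoordX 𝔽 ((Us j).subtype ⁻¹' X')
            (fun i => (A i ⊓ Us j).comap (Us j).subtype) :=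
          Finset.sum_le_sum fun j _ => Nat.sInf_le ⟨_, preimage_indep hX'ind, rfl⟩
      _ = disCoordX 𝔽 X' A := (disCoordX_decomp Us A hindep hfac hX'ind hX'cov).symm
      _ ≤ disCoordX 𝔽 X A :=
          Finset.sum_le_sum fun i _ => tsub_le_tsub_left (hX'card i) _
      _ = DisCoord 𝔽 A := hXval.symm
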